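/- Let K ⊆ ℝ be compact and f₁,…,f_m: K → K continuous and non-decreasing, such that for every a₁a₂a₃… ∈ {1,…,m}^ω the diameter of f_{a₁}∘…∘f_{a_n}(K) tends to 0. Then there exists a continuous metric d on K such that each f_i is d-contracting and, moreover, for all x ≤ s ≤ t ≤ y in K, d(s,t) ≤ d(x,y). -/

import Mathlib

open Filter Topology

/-- Composition `f_{a₁} ∘ f_{a₂} ∘ … ∘ f_{a_n}` of a family of maps along a finite word. -/
def wordComp {I : Type*} (f : I → ℝ → ℝ) : List I → ℝ → ℝ
  | [] => id
  | a :: t => f a ∘ wordComp f t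

namespace CAux
set_option linter.unusedSectionVars false
set_option linter.unusedVariables false

variable {I : Type*} [Fintype I] [Nonempty I]

theorem wordComp_append (f : I → ℝ → ℝ) (s t : List I) :
    wordComp f (s ++ t) = wordComp f s ∘ wordComp f t := by
  induction s with
  | nil => rfl
  | cons a s ih => simp [wordComp, ih, Function.comp_assoc]

theorem wordComp_mapsTo {K : Set ℝ} (f : I → ℝ → ℝ) (hfm : ∀ i, Set.MapsTo (f i) K K) :
    ∀ w : List I, Set.MapsTo (wordComp f w) K K
  | [] => Set.mapsTo_id K
  | a :: t => (hfm a).comp (wordComp_mapsTo f hfm t)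

theorem wordComp_mono {K : Set ℝ} (f : I → ℝ → ℝ) (hfm : ∀ i, Set.MapsTo (f i) K K)
    (hmono : ∀ i, ∀ x ∈ K, ∀ y ∈ K, x ≤ y → f i x ≤ f i y) :
    ∀ w : List I, ∀ x ∈ K, ∀ y ∈ K, x ≤ y → wordComp f w x ≤ wordComp f w y
  | [] => fun x _ y _ h => h
  | a :: t => fun x hx y hy h =>
      hmono a _ (wordComp_mapsTo f hfm t hx) _ (wordComp_mapsTo f hfm t hy)
        (wordComp_mono f hfm hmono t x hx y hy h)

theorem wordComp_continuousOn {K : Set ℝ} (f : I → ℝ → ℝ)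
    (hfc : ∀ i, ContinuousOn (f i) K) (hfm : ∀ i, Set.MapsTo (f i) K K) :
    ∀ w : List I, ContinuousOn (wordComp f w) K
  | [] => continuousOn_id
  | a :: t => (hfc a).comp (wordComp_continuousOn f hfc hfm t) (wordComp_mapsTo f hfm t)

/-- max over all words of length `n` of `|f_w x - f_w y|`. -/
noncomputable def delta (f : I → ℝ → ℝ) (n : ℕ) (x y : ℝ) : ℝ :=
  (Finset.univ : Finset (Fin n → I)).sup' Finset.univ_nonempty
    fun w => |wordComp f (List.ofFn w) x - wordComp f (List.ofFn w) y|


theorem le_delta (f : I → ℝ → ℝ) (n : ℕ) (x y : ℝ) (w : Fin n → I) :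
    |wordComp f (List.ofFn w) x - wordComp f (List.ofFn w) y| ≤ delta f n x y := by
  exact Finset.le_sup'
    (fun w : Fin n → I => |wordComp f (List.ofFn w) x - wordComp f (List.ofFn w) y|)
    (Finset.mem_univ w)

theorem delta_le (f : I → ℝ → ℝ) (n : ℕ) (x y a : ℝ)
    (h : ∀ w : Fin n → I, |wordComp f (List.ofFn w) x - wordComp f (List.ofFn w) y| ≤ a) :
    delta f n x y ≤ a := by
  unfold delta
  exact Finset.sup'_le _ _ fun w _ => h w

theorem delta_nonneg (f : I → ℝ → ℝ) (n : ℕ) (x y : ℝ) : 0 ≤ delta f n x y :=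
  Finset.le_sup'_of_le _ (Finset.mem_univ (Classical.arbitrary _)) (abs_nonneg _)

theorem delta_symm (f : I → ℝ → ℝ) (n : ℕ) (x y : ℝ) : delta f n x y = delta f n y x := by
  unfold delta
  congr 1
  funext w
  rw [abs_sub_comm]

theorem delta_self (f : I → ℝ → ℝ) (n : ℕ) (x : ℝ) : delta f n x x = 0 := by
  unfold delta
  simp

theorem delta_triangle (f : I → ℝ → ℝ) (n : ℕ) (x y z : ℝ) :
    delta f n x z ≤ delta f n x y + delta f n y z := by
  refine delta_le _ _ _ _ _ fun w => ?_
  calc |wordComp f (List.ofFn w) x - wordComp f (List.ofFn w) z|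
      ≤ |wordComp f (List.ofFn w) x - wordComp f (List.ofFn w) y|
        + |wordComp f (List.ofFn w) y - wordComp f (List.ofFn w) z| := abs_sub_le _ _ _
    _ ≤ delta f n x y + delta f n y z :=
        add_le_add (le_delta f n x y w) (le_delta f n y z w)

theorem delta_zero (f : I → ℝ → ℝ) (x y : ℝ) : delta f 0 x y = |x - y| := by
  unfold delta
  simp [wordComp]

theorem delta_le_diam {K : Set ℝ} (hK : IsCompact K) (f : I → ℝ → ℝ)
    (hfm : ∀ i, Set.MapsTo (f i) K K) (n : ℕ) {x y : ℝ} (hx : x ∈ K) (hy : y ∈ K) :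
    delta f n x y ≤ Metric.diam K := by
  refine delta_le _ _ _ _ _ fun w => ?_
  rw [← Real.dist_eq]
  exact Metric.dist_le_diam_of_mem hK.isBounded
    (wordComp_mapsTo f hfm _ hx) (wordComp_mapsTo f hfm _ hy)

theorem delta_lt_of_diam_lt {K : Set ℝ} (hK : IsCompact K) (f : I → ℝ → ℝ)
    (hfm : ∀ i, Set.MapsTo (f i) K K) {n : ℕ} {ε : ℝ}
    (hsm : ∀ w : List I, w.length = n → Metric.diam (wordComp f w '' K) < ε)
    {x y : ℝ} (hx : x ∈ K) (hy : y ∈ K) : delta f n x y < ε := by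
  rw [delta, Finset.sup'_lt_iff]
  intro w _
  calc |wordComp f (List.ofFn w) x - wordComp f (List.ofFn w) y|
      = dist (wordComp f (List.ofFn w) x) (wordComp f (List.ofFn w) y) := (Real.dist_eq _ _).symm
    _ ≤ Metric.diam (wordComp f (List.ofFn w) '' K) :=
        Metric.dist_le_diam_of_mem
          (hK.isBounded.subset (wordComp_mapsTo f hfm _).image_subset)
          (Set.mem_image_of_mem _ hx) (Set.mem_image_of_mem _ hy)
    _ < ε := hsm _ (by simp)

theorem delta_shift (f : I → ℝ → ℝ) (n : ℕ) (i : I) (x y : ℝ) :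
    delta f n (f i x) (f i y) ≤ delta f (n + 1) x y := by
  refine delta_le _ _ _ _ _ fun w => ?_
  have heq : List.ofFn (Fin.snoc w i : Fin (n+1) → I) = List.ofFn w ++ [i] := by
    rw [List.ofFn_succ']
    simp [List.concat_eq_append]
  have hcomp : ∀ z, wordComp f (List.ofFn w) (f i z)
      = wordComp f (List.ofFn (Fin.snoc w i : Fin (n+1) → I)) z := by
    intro z
    rw [heq, wordComp_append]
    rfl
  rw [hcomp, hcomp]
  exact le_delta f (n+1) x y _

theorem delta_mono {K : Set ℝ} (f : I → ℝ → ℝ) (hfm : ∀ i, Set.MapsTo (f i) K K)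
    (hmono : ∀ i, ∀ x ∈ K, ∀ y ∈ K, x ≤ y → f i x ≤ f i y) (n : ℕ)
    {x s t y : ℝ} (hx : x ∈ K) (hs : s ∈ K) (ht : t ∈ K) (hy : y ∈ K)
    (h1 : x ≤ s) (h2 : s ≤ t) (h3 : t ≤ y) : delta f n s t ≤ delta f n x y := by
  have wm := wordComp_mono f hfm hmono
  refine delta_le _ _ _ _ _ fun w => le_trans ?_ (le_delta f n x y w)
  have a1 := wm (List.ofFn w) x hx s hs h1
  have a2 := wm (List.ofFn w) s hs t ht h2
  have a3 := wm (List.ofFn w) t ht y hy h3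
  rw [abs_sub_comm (wordComp f (List.ofFn w) s), abs_of_nonneg (by linarith),
    abs_sub_comm (wordComp f (List.ofFn w) x), abs_of_nonneg (by linarith)]
  linarith

/-- continuity of a finite sup' of continuousOn functions -/
theorem continuousOn_sup' {α ι : Type*} [TopologicalSpace α] {U : Set α}
    {s : Finset ι} (hs : s.Nonempty) {F : ι → α → ℝ} :
    (∀ i ∈ s, ContinuousOn (F i) U) →
    ContinuousOn (fun p => s.sup' hs fun i => F i p) U := by
  induction hs using Finset.Nonempty.cons_induction with
  | singleton a =>
      intro hF
      simpa using hF a (by simp)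
  | cons a s ha hs ih =>
      intro hF
      simp only [Finset.sup'_cons hs]
      exact ((hF a (by simp)).sup (ih fun i hi => hF i (by simp [hi])))

theorem delta_continuousOn {K : Set ℝ} (f : I → ℝ → ℝ)
    (hfc : ∀ i, ContinuousOn (f i) K) (hfm : ∀ i, Set.MapsTo (f i) K K) (n : ℕ) :
    ContinuousOn (fun p : ℝ × ℝ => delta f n p.1 p.2) (K ×ˢ K) := by
  unfold delta
  refine continuousOn_sup' _ fun w _ => ?_
  have hc : ContinuousOn (wordComp f (List.ofFn w)) K :=
    wordComp_continuousOn f hfc hfm _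
  refine ((hc.comp continuousOn_fst fun p hp => (Set.mem_prod.1 hp).1).sub
    (hc.comp continuousOn_snd fun p hp => (Set.mem_prod.1 hp).2)).abs
/-- diameter decreases when extending a word on the right -/
theorem diam_prefix {K : Set ℝ} (hK : IsCompact K) (f : I → ℝ → ℝ)
    (hfm : ∀ i, Set.MapsTo (f i) K K) (s t : List I) :
    Metric.diam (wordComp f (s ++ t) '' K) ≤ Metric.diam (wordComp f s '' K) := by
  rw [wordComp_append, Set.image_comp]
  exact Metric.diam_mono (Set.image_mono (wordComp_mapsTo f hfm t).image_subset)
    (hK.isBounded.subset (wordComp_mapsTo f hfm s).image_subset)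

/-- uniform smallness of diameters, via compactness of the word space (König). -/
theorem diam_small {K : Set ℝ} (hK : IsCompact K) (f : I → ℝ → ℝ)
    (hfm : ∀ i, Set.MapsTo (f i) K K)
    (hdiam : ∀ a : ℕ → I,
      Tendsto (fun n : ℕ =>
          Metric.diam (wordComp f (List.ofFn fun i : Fin n => a i) '' K)) atTop (𝓝 0))
    {ε : ℝ} (hε : 0 < ε) :
    ∃ N : ℕ, ∀ w : List I, N ≤ w.length → Metric.diam (wordComp f w '' K) < ε := by
  by_contra h
  push_neg at h
  have key : ∀ n : ℕ, ∃ w : List I, w.length = n ∧ ε ≤ Metric.diam (wordComp f w '' K) := by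
    intro n
    obtain ⟨w, hlen, hw⟩ := h n
    refine ⟨w.take n, by simp [hlen], ?_⟩
    calc ε ≤ Metric.diam (wordComp f w '' K) := hw
    _ = Metric.diam (wordComp f (w.take n ++ w.drop n) '' K) := by rw [List.take_append_drop]
    _ ≤ _ := diam_prefix hK f hfm _ _
  letI : TopologicalSpace I := ⊥
  haveI : DiscreteTopology I := ⟨rfl⟩
  set S : ℕ → Set (ℕ → I) := fun n =>
    {a | ε ≤ Metric.diam (wordComp f (List.ofFn fun i : Fin n => a i) '' K)} with hS
  have hsub : ∀ n, S (n + 1) ⊆ S n := by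
    intro n a ha
    have heq : (List.ofFn fun i : Fin (n+1) => a i)
        = (List.ofFn fun i : Fin n => a i) ++ [a n] := by
      rw [List.ofFn_succ']
      simp [List.concat_eq_append]
    simp only [hS, Set.mem_setOf_eq] at ha ⊢
    refine le_trans ha ?_
    rw [heq]
    exact diam_prefix hK f hfm _ _
  have hnon : ∀ n, (S n).Nonempty := by
    intro n
    obtain ⟨w, hlen, hw⟩ := key n
    refine ⟨fun k => w.getD k (Classical.arbitrary I), ?_⟩
    have : (List.ofFn fun i : Fin n => w.getD (i : ℕ) (Classical.arbitrary I)) = w := by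
      refine List.ext_getElem (by simp [hlen]) ?_
      intro k h1 h2
      simp only [List.getElem_ofFn]
      exact List.getD_eq_getElem _ _ h2
    show ε ≤ _
    rw [this]
    exact hw
  have hclosed : ∀ n, IsClosed (S n) := by
    intro n
    have : S n = (fun (a : ℕ → I) (i : Fin n) => a (i : ℕ)) ⁻¹'
        {v : Fin n → I | ε ≤ Metric.diam (wordComp f (List.ofFn v) '' K)} := rfl
    rw [this]
    exact (isClosed_discrete _).preimage (continuous_pi fun i => continuous_apply _)
  obtain ⟨a, ha⟩ := IsCompact.nonempty_iInter_of_sequence_nonempty_isCompact_isClosed S hsub hnon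
    ((hclosed 0).isCompact) hclosed
  have ha' : ∀ n, ε ≤ Metric.diam (wordComp f (List.ofFn fun i : Fin n => a i) '' K) :=
    fun n => Set.mem_iInter.1 ha n
  obtain ⟨n, hn⟩ := ((hdiam a).eventually_lt_const hε).exists
  exact absurd (ha' n) (not_le.2 hn)


noncomputable def cseq (n : ℕ) : ℝ := 2 - (1/2 : ℝ)^n

theorem cseq_zero : cseq 0 = 1 := by norm_num [cseq]

theorem cseq_pos (n : ℕ) : 0 < cseq n := by
  have : (1/2 : ℝ)^n ≤ 1 := pow_le_one₀ (by norm_num) (by norm_num)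
  simp only [cseq]; linarith

theorem cseq_nonneg (n : ℕ) : 0 ≤ cseq n := (cseq_pos n).le

theorem cseq_le_two (n : ℕ) : cseq n ≤ 2 := by
  have : (0:ℝ) < (1/2 : ℝ)^n := pow_pos (by norm_num) n
  simp only [cseq]; linarith

theorem cseq_lt_succ (n : ℕ) : cseq n < cseq (n + 1) := by
  have h : (1/2 : ℝ)^(n+1) < (1/2 : ℝ)^n := by
    rw [pow_succ]
    have : (0:ℝ) < (1/2 : ℝ)^n := pow_pos (by norm_num) n
    nlinarith
  simp only [cseq]; linarith

end CAux

open CAux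

theorem exists_contracting_monotone_metric
    {I : Type*} [Fintype I] [Nonempty I]
    (K : Set ℝ) (hK : IsCompact K) (hne : K.Nonempty)
    (f : I → ℝ → ℝ)
    (hfc : ∀ i, ContinuousOn (f i) K)
    (hfm : ∀ i, Set.MapsTo (f i) K K)
    (hmono : ∀ i, ∀ x ∈ K, ∀ y ∈ K, x ≤ y → f i x ≤ f i y)
    (hdiam : ∀ a : ℕ → I,
      Tendsto
        (fun n : ℕ =>
          Metric.diam (wordComp f (List.ofFn fun i : Fin n => a i) '' K))
        atTop (𝓝 0)) :
    ∃ d : ℝ → ℝ → ℝ,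
      ContinuousOn (fun p : ℝ × ℝ => d p.1 p.2) (K ×ˢ K) ∧
      (∀ x ∈ K, ∀ y ∈ K, 0 ≤ d x y) ∧
      (∀ x ∈ K, ∀ y ∈ K, (d x y = 0 ↔ x = y)) ∧
      (∀ x ∈ K, ∀ y ∈ K, d x y = d y x) ∧
      (∀ x ∈ K, ∀ y ∈ K, ∀ z ∈ K, d x z ≤ d x y + d y z) ∧
      (∀ i, ∀ x ∈ K, ∀ y ∈ K, x ≠ y → d (f i x) (f i y) < d x y) ∧
      (∀ x ∈ K, ∀ s ∈ K, ∀ t ∈ K, ∀ y ∈ K,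
        x ≤ s → s ≤ t → t ≤ y → d s t ≤ d x y) := by
  classical
  set d : ℝ → ℝ → ℝ := fun x y => ⨆ n : ℕ, cseq n * delta f n x y with hd
  have hbdd : ∀ x ∈ K, ∀ y ∈ K,
      BddAbove (Set.range fun n : ℕ => cseq n * delta f n x y) := by
    intro x hx y hy
    refine ⟨2 * Metric.diam K, ?_⟩
    rintro r ⟨n, rfl⟩
    have h1 : cseq n * delta f n x y ≤ 2 * delta f n x y :=
      mul_le_mul_of_nonneg_right (cseq_le_two n) (delta_nonneg f n x y)
    have h2 := delta_le_diam hK f hfm n hx hy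
    simp only
    linarith
  have hterm : ∀ x ∈ K, ∀ y ∈ K, ∀ n : ℕ, cseq n * delta f n x y ≤ d x y := by
    intro x hx y hy n
    exact le_ciSup (hbdd x hx y hy) n
  have hlb : ∀ x ∈ K, ∀ y ∈ K, |x - y| ≤ d x y := by
    intro x hx y hy
    have := hterm x hx y hy 0
    rwa [delta_zero, cseq_zero, one_mul] at this
  have hnonneg : ∀ x ∈ K, ∀ y ∈ K, 0 ≤ d x y := fun x hx y hy =>
    Real.iSup_nonneg fun n => mul_nonneg (cseq_nonneg n) (delta_nonneg f n x y)
  refine ⟨d, ?_, hnonneg, ?_, ?_, ?_, ?_, ?_⟩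
  · -- continuity
    have hH : ∀ N : ℕ, ContinuousOn
        (fun p : ℝ × ℝ => (Finset.range (N+1)).sup'
          (by simp) fun n => cseq n * delta f n p.1 p.2) (K ×ˢ K) := fun N =>
      continuousOn_sup' _ fun n _ =>
        continuousOn_const.mul (delta_continuousOn f hfc hfm n)
    have key : TendstoUniformlyOn
        (fun (N : ℕ) (p : ℝ × ℝ) => (Finset.range (N+1)).sup'
          (by simp) fun n => cseq n * delta f n p.1 p.2)
        (fun p : ℝ × ℝ => d p.1 p.2) atTop (K ×ˢ K) := by
      rw [Metric.tendstoUniformlyOn_iff]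
      intro ε hε
      obtain ⟨N₀, hN₀⟩ := diam_small hK f hfm hdiam (show (0:ℝ) < ε/4 by linarith)
      filter_upwards [eventually_ge_atTop N₀] with N hN
      rintro ⟨x, y⟩ hp
      obtain ⟨hx, hy⟩ := Set.mem_prod.1 hp
      set F : ℝ := (Finset.range (N+1)).sup' (by simp)
        (fun n => cseq n * delta f n x y) with hF
      have hF0 : 0 ≤ F := by
        rw [hF]
        exact le_trans (mul_nonneg (cseq_nonneg 0) (delta_nonneg f 0 x y))
          (Finset.le_sup' (fun n => cseq n * delta f n x y)
            (by simp : 0 ∈ Finset.range (N+1)))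
      have hle1 : F ≤ d x y := by
        rw [hF]
        exact Finset.sup'_le _ _ fun n _ => hterm x hx y hy n
      have hle2 : d x y ≤ F + ε/2 := by
        refine ciSup_le fun n => ?_
        rcases le_or_gt n N with hn | hn
        · have : cseq n * delta f n x y ≤ F := by
            rw [hF]
            exact Finset.le_sup' (fun n => cseq n * delta f n x y)
              (by simp [Finset.mem_range]; omega)
          linarith
        · have hδ : delta f n x y < ε/4 :=
            delta_lt_of_diam_lt hK f hfm (fun w hw => hN₀ w (by omega)) hx hy
          have : cseq n * delta f n x y ≤ 2 * delta f n x y :=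
            mul_le_mul_of_nonneg_right (cseq_le_two n) (delta_nonneg f n x y)
          linarith
      rw [Real.dist_eq, abs_sub_lt_iff]
      constructor <;> linarith
    exact key.continuousOn (Eventually.of_forall hH).frequently
  · -- eq zero iff
    intro x hx y hy
    constructor
    · intro h
      have := hlb x hx y hy
      rw [h] at this
      have := abs_nonpos_iff.1 this
      linarith [sub_eq_zero.1 this]
    · rintro rfl
      simp only [hd, delta_self, mul_zero, ciSup_const]
  · -- symm
    intro x hx y hy
    simp only [hd]
    congr 1
    funext n
    rw [delta_symm]
  · -- triangle
    intro x hx y hy z hz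
    refine ciSup_le fun n => ?_
    have h1 : cseq n * delta f n x z ≤ cseq n * (delta f n x y + delta f n y z) :=
      mul_le_mul_of_nonneg_left (delta_triangle f n x y z) (cseq_nonneg n)
    rw [mul_add] at h1
    exact h1.trans (add_le_add (hterm x hx y hy n) (hterm y hy z hz n))
  · -- contraction
    intro i x hx y hy hxy
    have hxy' : 0 < |x - y| := abs_pos.2 (sub_ne_zero.2 hxy)
    have hdpos : 0 < d x y := lt_of_lt_of_le hxy' (hlb x hx y hy)
    obtain ⟨N, hN⟩ := diam_small hK f hfm hdiam (show (0:ℝ) < |x - y|/4 by linarith)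
    set q : ℝ := (Finset.range (N+1)).sup' (by simp) (fun n => cseq n / cseq (n+1)) with hq
    have hq1 : q < 1 := by
      rw [hq, Finset.sup'_lt_iff]
      intro n _
      exact (div_lt_one (cseq_pos (n+1))).2 (cseq_lt_succ n)
    have hq0 : 0 ≤ q := by
      rw [hq]
      exact le_trans (div_nonneg (cseq_nonneg 0) (cseq_nonneg 1))
        (Finset.le_sup' (fun n => cseq n / cseq (n+1)) (by simp : 0 ∈ Finset.range (N+1)))
    have hr : ∀ n : ℕ, cseq n * delta f n (f i x) (f i y)
        ≤ max (|x - y|/2) (q * d x y) := by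
      intro n
      rcases le_or_gt n N with hn | hn
      · refine le_trans ?_ (le_max_right _ _)
        have h1 : cseq n * delta f n (f i x) (f i y) ≤ cseq n * delta f (n+1) x y :=
          mul_le_mul_of_nonneg_left (delta_shift f n i x y) (cseq_nonneg n)
        have h2 : cseq n * delta f (n+1) x y
            = (cseq n / cseq (n+1)) * (cseq (n+1) * delta f (n+1) x y) := by
          field_simp [(cseq_pos (n+1)).ne']
        have h3 : cseq n / cseq (n+1) ≤ q := by
          rw [hq]
          exact Finset.le_sup' (fun n => cseq n / cseq (n+1))
            (by simp [Finset.mem_range]; omega)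
        have h4 : cseq (n+1) * delta f (n+1) x y ≤ d x y := hterm x hx y hy (n+1)
        have h5 : 0 ≤ cseq (n+1) * delta f (n+1) x y :=
          mul_nonneg (cseq_nonneg _) (delta_nonneg f _ x y)
        calc cseq n * delta f n (f i x) (f i y)
            ≤ (cseq n / cseq (n+1)) * (cseq (n+1) * delta f (n+1) x y) := by
              rw [← h2]; exact h1
          _ ≤ q * d x y := mul_le_mul h3 h4 h5 hq0
      · refine le_trans ?_ (le_max_left _ _)
        have hδ : delta f n (f i x) (f i y) < |x - y|/4 :=
          delta_lt_of_diam_lt hK f hfm (fun w hw => hN w (by omega))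
            (hfm i hx) (hfm i hy)
        have : cseq n * delta f n (f i x) (f i y) ≤ 2 * delta f n (f i x) (f i y) :=
          mul_le_mul_of_nonneg_right (cseq_le_two n) (delta_nonneg f n _ _)
        linarith
    have hle : d (f i x) (f i y) ≤ max (|x - y|/2) (q * d x y) := ciSup_le hr
    refine lt_of_le_of_lt hle (max_lt ?_ ?_)
    · linarith [hlb x hx y hy]
    · nlinarith
  · -- monotone
    intro x hx s hs t ht y hy h1 h2 h3
    refine ciSup_le fun n => ?_
    exact (mul_le_mul_of_nonneg_left
      (delta_mono f hfm hmono n hx hs ht hy h1 h2 h3) (cseq_nonneg n)).trans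
      (hterm x hx y hy n)
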